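/- Let G be a nonempty r-uniform directed hypergraph on M ≥ 100r vertices such that the undirected hypergraph [G] of complete r-sets has density at most 1−α. Then there exist ℓ ∈ [r] and an (r−1)-tuple Y of distinct vertices such that 1 ≤ |N_{[r]∖{ℓ}}(Y)| ≤ (1 − α/(2r·r!))·M, where N_{[r]∖{ℓ}}(Y) is the set of vertices v for which inserting v at position ℓ into Y yields a directed edge. -/

import Mathlib

open Finset

section Aux

variable {r : ℕ} {V : Type}

/-- Insert `v` at position `ℓ` into the partial tuple `Y`. -/
def insTup (ℓ : Fin r) (Y : {j : Fin r // j ≠ ℓ} → V) (v : V) : Fin r → V :=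
  fun j => if h : j = ℓ then v else Y ⟨j, h⟩

/-- Delete position `ℓ` from tuple `u`. -/
def delTup (ℓ : Fin r) (u : Fin r → V) : {j : Fin r // j ≠ ℓ} → V :=
  fun j => u j.1

lemma insTup_delTup (ℓ : Fin r) (u : Fin r → V) : insTup ℓ (delTup ℓ u) (u ℓ) = u := by
  funext j
  simp only [insTup, delTup]
  split
  · rename_i h; rw [h]
  · rfl

lemma delTup_injective {ℓ : Fin r} {u : Fin r → V} (hu : Function.Injective u) :
    Function.Injective (delTup ℓ u) := by
  intro a b hab
  exact Subtype.ext (hu hab)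

lemma insTup_apply_ne (ℓ : Fin r) (Y : {j : Fin r // j ≠ ℓ} → V) (v : V)
    (i : {j : Fin r // j ≠ ℓ}) : insTup ℓ Y v i.1 = Y i := by
  simp only [insTup, dif_neg i.2]

lemma insTup_apply_self (ℓ : Fin r) (Y : {j : Fin r // j ≠ ℓ} → V) (v : V) :
    insTup ℓ Y v ℓ = v := by simp [insTup]

lemma ne_of_insTup_injective {ℓ : Fin r} {Y : {j : Fin r // j ≠ ℓ} → V} {v : V}
    (h : Function.Injective (insTup ℓ Y v)) (i : {j : Fin r // j ≠ ℓ}) : Y i ≠ v := by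
  intro hYv
  have : insTup ℓ Y v i.1 = insTup ℓ Y v ℓ := by
    rw [insTup_apply_ne, insTup_apply_self, hYv]
  exact i.2 (h this)

end Aux

lemma tree_count {ι W : Type} [Fintype ι] [DecidableEq ι] [DecidableEq W]
    (n₀ : ℕ) (A : Finset (ι → W)) (hA : A.Nonempty)
    (hrep : ∀ Y ∈ A, ∀ i : ι, ∃ X : Finset W, n₀ ≤ X.card ∧
      ∀ x ∈ X, Function.update Y i x ∈ A) :
    n₀ ^ Fintype.card ι ≤ A.card := by
  classical
  obtain ⟨Y₀, hY₀⟩ := hA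
  set m := Fintype.card ι with hm
  set e : Fin m ≃ ι := (Fintype.equivFin ι).symm with he
  choose! X hX1 hX2 using hrep
  set G : ℕ → Finset (ι → W) := fun k =>
    A.filter (fun Y => ∀ i : Fin m, k ≤ (i : ℕ) → Y (e i) = Y₀ (e i)) with hG
  have hGsub : ∀ k, G k ⊆ A := fun k => filter_subset _ _
  have key : ∀ k, k ≤ m → n₀ ^ k ≤ (G k).card := by
    intro k
    induction k with
    | zero =>
      intro _
      have : Y₀ ∈ G 0 := mem_filter.2 ⟨hY₀, fun i _ => rfl⟩
      simpa using card_pos.2 ⟨Y₀, this⟩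
    | succ k ih =>
      intro hk
      have hkm : k < m := hk
      have ihk := ih hkm.le
      set i₀ : ι := e ⟨k, hkm⟩ with hi₀
      have hsub : (G k).biUnion (fun Y => (X Y i₀).image (fun x => Function.update Y i₀ x))
          ⊆ G (k + 1) := by
        intro Z hZ
        simp only [mem_biUnion, mem_image] at hZ
        obtain ⟨Y, hY, x, hx, rfl⟩ := hZ
        have hYA : Y ∈ A := hGsub _ hY
        simp only [hG, mem_filter] at hY ⊢
        refine ⟨hX2 Y hYA i₀ x hx, fun i hi => ?_⟩
        have hne : e i ≠ i₀ := by
          intro h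
          have hik : i = ⟨k, hkm⟩ := e.injective h
          have : (i : ℕ) = k := by rw [hik]
          omega
        rw [Function.update_of_ne hne]
        exact hY.2 i (by omega)
      have hdisj : ∀ Y₁ ∈ G k, ∀ Y₂ ∈ G k, Y₁ ≠ Y₂ →
          Disjoint ((X Y₁ i₀).image (fun x => Function.update Y₁ i₀ x))
            ((X Y₂ i₀).image (fun x => Function.update Y₂ i₀ x)) := by
        intro Y₁ h₁ Y₂ h₂ hne
        rw [disjoint_left]
        intro Z hZ1 hZ2
        simp only [mem_image] at hZ1 hZ2
        obtain ⟨x₁, _, rfl⟩ := hZ1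
        obtain ⟨x₂, _, hEq⟩ := hZ2
        apply hne
        simp only [hG, mem_filter] at h₁ h₂
        funext j
        by_cases hj : j = i₀
        · subst hj
          rw [h₁.2 ⟨k, hkm⟩ le_rfl, h₂.2 ⟨k, hkm⟩ le_rfl]
        · have := congrFun hEq j
          rw [Function.update_of_ne hj, Function.update_of_ne hj] at this
          exact this.symm
      calc n₀ ^ (k + 1) = n₀ ^ k * n₀ := by ring
        _ ≤ (G k).card * n₀ := Nat.mul_le_mul_right _ ihk
        _ = ∑ _Y ∈ G k, n₀ := by rw [sum_const, smul_eq_mul]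
        _ ≤ ∑ Y ∈ G k, ((X Y i₀).image (fun x => Function.update Y i₀ x)).card := by
            apply sum_le_sum
            intro Y hY
            rw [card_image_of_injective _ (fun a b hab => by
              simpa using congrFun hab i₀)]
            exact hX1 Y (hGsub _ hY) i₀
        _ = ((G k).biUnion (fun Y => (X Y i₀).image (fun x => Function.update Y i₀ x))).card :=
            (card_biUnion hdisj).symm
        _ ≤ (G (k + 1)).card := card_le_card hsub
  calc n₀ ^ m ≤ (G m).card := key m le_rfl
    _ ≤ A.card := card_le_card (hGsub m)

set_option maxHeartbeats 1000000 in
/-- Medium-degree lemma for directed hypergraphs: if [G] has density ≤ 1-α, there is a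
position ℓ and an (r-1)-tuple Y with 1 ≤ |N_{[r]∖{ℓ}}(Y)| ≤ (1-α/(2r·r!))·M. -/
theorem stmt_12 (r M : ℕ) (hr : 0 < r) (hM : 100 * r ≤ M) (α : ℝ) (hα : 0 < α)
    (V : Type) [Fintype V] [DecidableEq V] (hV : Fintype.card V = M)
    (E : Set (Fin r → V)) (hEinj : ∀ w ∈ E, Function.Injective w)
    (hne : E.Nonempty)
    (hdens : ({S : Finset V | S.card = r ∧ ∀ w : Fin r → V, Function.Injective w →
        Finset.image w Finset.univ = S → w ∈ E}.ncard : ℝ) ≤ (1 - α) * (M.choose r : ℝ)) :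
    ∃ (ℓ : Fin r) (Y : {j : Fin r // j ≠ ℓ} → V), Function.Injective Y ∧
      1 ≤ {v : V | (fun j : Fin r =>
            if h : j = ℓ then v else Y ⟨j, h⟩) ∈ E}.ncard ∧
      ({v : V | (fun j : Fin r =>
            if h : j = ℓ then v else Y ⟨j, h⟩) ∈ E}.ncard : ℝ) ≤
        (1 - α / (2 * r * (r.factorial : ℝ))) * M := by
  classical
  by_contra hcon
  push_neg at hcon
  set ε : ℝ := α / (2 * r * (r.factorial : ℝ)) with hεdef
  -- basic positivity facts
  have hrR : (1:ℝ) ≤ (r:ℝ) := by exact_mod_cast hr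
  have hfacR : (1:ℝ) ≤ (r.factorial : ℝ) := by exact_mod_cast r.factorial_pos
  have hεpos : 0 < ε := by
    rw [hεdef]; positivity
  have hrM : r ≤ M := le_trans (by omega) hM
  have hchoose_pos : 0 < (M.choose r : ℝ) := by exact_mod_cast Nat.choose_pos hrM
  have hα1 : α ≤ 1 := by
    have h0 : (0:ℝ) ≤ (1 - α) * (M.choose r : ℝ) := le_trans (Nat.cast_nonneg _) hdens
    nlinarith
  have hε1 : ε ≤ 1 / 2 := by
    rw [hεdef, div_le_iff₀ (by positivity)]
    nlinarith
  -- the threshold n₀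
  set n₀ : ℕ := ⌊(1 - ε) * M⌋₊ + 1 with hn₀def
  have h1εM : (0:ℝ) ≤ (1 - ε) * M := by
    apply mul_nonneg (by linarith) (Nat.cast_nonneg M)
  have hn₀gt : (1 - ε) * M < (n₀ : ℝ) := by
    rw [hn₀def]
    push_cast
    exact Nat.lt_floor_add_one _
  -- neighborhoods as finsets
  set Nb : (ℓ : Fin r) → ({j : Fin r // j ≠ ℓ} → V) → Finset V :=
    fun ℓ Y => univ.filter (fun v => insTup ℓ Y v ∈ E) with hNbdef
  have hmemNb : ∀ (ℓ : Fin r) (Y : {j : Fin r // j ≠ ℓ} → V) (v : V),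
      v ∈ Nb ℓ Y ↔ insTup ℓ Y v ∈ E := by
    intro ℓ Y v
    simp [hNbdef]
  have hNbset : ∀ (ℓ : Fin r) (Y : {j : Fin r // j ≠ ℓ} → V),
      {v : V | (fun j : Fin r => if h : j = ℓ then v else Y ⟨j, h⟩) ∈ E} = ↑(Nb ℓ Y) := by
    intro ℓ Y
    ext v
    simp only [Set.mem_setOf_eq, Finset.mem_coe, hmemNb]
    exact Iff.rfl
  -- key: nonempty neighborhoods are large
  have hkey : ∀ (ℓ : Fin r) (Y : {j : Fin r // j ≠ ℓ} → V), Function.Injective Y →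
      (Nb ℓ Y).Nonempty → n₀ ≤ (Nb ℓ Y).card := by
    intro ℓ Y hYinj hNbne
    have h1 : 1 ≤ {v : V | (fun j : Fin r =>
        if h : j = ℓ then v else Y ⟨j, h⟩) ∈ E}.ncard := by
      rw [hNbset, Set.ncard_coe_finset]
      exact card_pos.2 hNbne
    have hlt := hcon ℓ Y hYinj h1
    rw [hNbset, Set.ncard_coe_finset] at hlt
    have : (1 - ε) * M < ((Nb ℓ Y).card : ℝ) := hlt
    have hfl : ⌊(1 - ε) * M⌋₊ < (Nb ℓ Y).card := by
      rw [Nat.floor_lt h1εM]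
      exact_mod_cast this
    omega
  -- membership facts
  have hE_mem : ∀ (ℓ : Fin r) (u : Fin r → V), u ∈ E → u ℓ ∈ Nb ℓ (delTup ℓ u) := by
    intro ℓ u hu
    rw [hmemNb, insTup_delTup]
    exact hu
  -- setup position ℓ₀ and the good set A
  set ℓ₀ : Fin r := ⟨0, hr⟩ with hℓ₀
  set ι := {j : Fin r // j ≠ ℓ₀} with hι
  have hcι : Fintype.card ι = r - 1 := by
    show Fintype.card {j : Fin r // j ≠ ℓ₀} = r - 1
    rw [Fintype.card_subtype_compl, Fintype.card_fin, Fintype.card_subtype_eq]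
  set A : Finset (ι → V) :=
    univ.filter (fun Y => Function.Injective Y ∧ (Nb ℓ₀ Y).Nonempty) with hAdef
  -- A is nonempty
  obtain ⟨w₀, hw₀⟩ := hne
  have hAne : A.Nonempty := by
    refine ⟨delTup ℓ₀ w₀, mem_filter.2 ⟨mem_univ _, delTup_injective (hEinj w₀ hw₀),
      ⟨w₀ ℓ₀, hE_mem ℓ₀ w₀ hw₀⟩⟩⟩
  -- replacement property
  have hrep : ∀ Y ∈ A, ∀ i : ι, ∃ X : Finset V, n₀ ≤ X.card ∧
      ∀ x ∈ X, Function.update Y i x ∈ A := by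
    intro Y hY i
    obtain ⟨-, hYinj, v, hv⟩ := mem_filter.1 hY
    have hu : insTup ℓ₀ Y v ∈ E := (hmemNb ℓ₀ Y v).1 hv
    set u : Fin r → V := insTup ℓ₀ Y v with hudef
    have huinj : Function.Injective u := hEinj u hu
    set j : Fin r := i.1 with hjdef
    have hjℓ : j ≠ ℓ₀ := i.2
    refine ⟨Nb j (delTup j u), ?_, ?_⟩
    · exact hkey j (delTup j u) (delTup_injective huinj) ⟨u j, hE_mem j u hu⟩
    · intro x hx
      have hu' : insTup j (delTup j u) x ∈ E := (hmemNb j (delTup j u) x).1 hx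
      set u' : Fin r → V := insTup j (delTup j u) x with hu'def
      have hux : Function.update Y i x = delTup ℓ₀ u' := by
        funext i'
        by_cases hii : i' = i
        · subst hii
          rw [Function.update_self]
          show x = u' i'.1
          rw [hu'def, ← hjdef, insTup_apply_self]
        · rw [Function.update_of_ne hii]
          show Y i' = u' i'.1
          have hi'j : i'.1 ≠ j := by
            intro h
            exact hii (Subtype.ext h)
          have h1 : u' i'.1 = delTup j u ⟨i'.1, hi'j⟩ := insTup_apply_ne j (delTup j u) x ⟨i'.1, hi'j⟩
          have h2 : delTup j u ⟨i'.1, hi'j⟩ = u i'.1 := rfl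
          have h3 : u i'.1 = Y i' := by
            rw [hudef]
            have := insTup_apply_ne ℓ₀ Y v i'
            simpa using this
          rw [h1, h2, h3]
      rw [hux]
      refine mem_filter.2 ⟨mem_univ _, delTup_injective (hEinj u' hu'), ⟨u' ℓ₀, hE_mem ℓ₀ u' hu'⟩⟩
  set q : ℕ := r - 1 with hqdef
  have hq : q + 1 = r := by omega
  have hqM : q ≤ M := by omega
  have hAcard : n₀ ^ q ≤ A.card := by
    have := tree_count n₀ A hAne hrep
    rwa [hcι] at this
  -- the set of injective (r-1)-tuples
  set InjY : Finset (ι → V) := univ.filter (fun Y => Function.Injective Y) with hInjYdef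
  have hAsub : A ⊆ InjY := by
    intro Y hY
    exact mem_filter.2 ⟨mem_univ _, (mem_filter.1 hY).2.1⟩
  have hPcard : InjY.card = M.descFactorial q := by
    have h1 : InjY.card = Fintype.card {Y : ι → V // Function.Injective Y} :=
      (Fintype.card_subtype _).symm
    rw [h1, Fintype.card_congr (Equiv.subtypeInjectiveEquivEmbedding ι V),
      Fintype.card_embedding_eq, hV, hcι]
  -- non-edges
  set NE : Finset (Fin r → V) := univ.filter (fun u => Function.Injective u ∧ u ∉ E) with hNEdef
  have hmaps : ∀ u ∈ NE, delTup ℓ₀ u ∈ InjY := by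
    intro u hu
    exact mem_filter.2 ⟨mem_univ _, delTup_injective (mem_filter.1 hu).2.1⟩
  have hfibsum : NE.card = ∑ Y ∈ InjY, (NE.filter (fun u => delTup ℓ₀ u = Y)).card :=
    card_eq_sum_card_fiberwise hmaps
  -- generic facts about fibers
  have hfib_card : ∀ Y ∈ InjY,
      ((NE.filter (fun u => delTup ℓ₀ u = Y)).image (fun u => u ℓ₀)).card
        = (NE.filter (fun u => delTup ℓ₀ u = Y)).card := by
    intro Y hY
    apply card_image_of_injOn
    intro u hu u' hu' h
    have h1 : delTup ℓ₀ u = Y := (mem_filter.1 hu).2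
    have h2 : delTup ℓ₀ u' = Y := (mem_filter.1 hu').2
    have e1 := insTup_delTup ℓ₀ u
    rw [h1] at e1
    have e2 := insTup_delTup ℓ₀ u'
    rw [h2] at e2
    rw [← e1, ← e2]
    exact congrArg _ h
  have himgY : ∀ Y : ι → V, Function.Injective Y → (univ.image Y).card = q := by
    intro Y hYinj
    rw [card_image_of_injective _ hYinj, card_univ, hcι]
  have hd2 : ∀ Y ∈ InjY, Disjoint
      ((NE.filter (fun u => delTup ℓ₀ u = Y)).image (fun u => u ℓ₀)) (univ.image Y) := by
    intro Y hY
    rw [disjoint_left]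
    intro x hx1 hx2
    simp only [mem_image] at hx1 hx2
    obtain ⟨u, hu, rfl⟩ := hx1
    obtain ⟨i, -, hi⟩ := hx2
    have h1 : delTup ℓ₀ u = Y := (mem_filter.1 hu).2
    have huinj : Function.Injective u := (mem_filter.1 (mem_filter.1 hu).1).2.1
    have : u i.1 = u ℓ₀ := by
      rw [← hi, ← h1]; rfl
    exact i.2 (huinj this)
  -- fiber bounds
  have hany : ∀ Y ∈ InjY, (NE.filter (fun u => delTup ℓ₀ u = Y)).card + q ≤ M := by
    intro Y hY
    have hYinj : Function.Injective Y := (mem_filter.1 hY).2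
    calc (NE.filter (fun u => delTup ℓ₀ u = Y)).card + q
        = (((NE.filter (fun u => delTup ℓ₀ u = Y)).image (fun u => u ℓ₀)) ∪ univ.image Y).card := by
          rw [card_union_of_disjoint (hd2 Y hY), hfib_card Y hY, himgY Y hYinj]
      _ ≤ (univ : Finset V).card := card_le_card (subset_univ _)
      _ = M := by rw [card_univ, hV]
  have hgood : ∀ Y ∈ A, (NE.filter (fun u => delTup ℓ₀ u = Y)).card
      + ((Nb ℓ₀ Y).card + q) ≤ M := by
    intro Y hY
    have hYInjY : Y ∈ InjY := hAsub hY
    have hYinj : Function.Injective Y := (mem_filter.1 hYInjY).2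
    have hd1 : Disjoint ((NE.filter (fun u => delTup ℓ₀ u = Y)).image (fun u => u ℓ₀))
        (Nb ℓ₀ Y) := by
      rw [disjoint_left]
      intro x hx1 hx2
      simp only [mem_image] at hx1
      obtain ⟨u, hu, rfl⟩ := hx1
      have h1 : delTup ℓ₀ u = Y := (mem_filter.1 hu).2
      have hE' : insTup ℓ₀ Y (u ℓ₀) ∈ E := (hmemNb ℓ₀ Y (u ℓ₀)).1 hx2
      have e1 := insTup_delTup ℓ₀ u
      rw [h1] at e1
      rw [e1] at hE'
      exact (mem_filter.1 hu).1 |> mem_filter.1 |>.2.2 hE'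
    have hd3 : Disjoint (Nb ℓ₀ Y) (univ.image Y) := by
      rw [disjoint_left]
      intro v hv1 hv2
      simp only [mem_image] at hv2
      obtain ⟨i, -, hi⟩ := hv2
      have hE' : insTup ℓ₀ Y v ∈ E := (hmemNb ℓ₀ Y v).1 hv1
      exact ne_of_insTup_injective (hEinj _ hE') i hi
    calc (NE.filter (fun u => delTup ℓ₀ u = Y)).card + ((Nb ℓ₀ Y).card + q)
        = (((NE.filter (fun u => delTup ℓ₀ u = Y)).image (fun u => u ℓ₀))
            ∪ ((Nb ℓ₀ Y) ∪ univ.image Y)).card := by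
          rw [card_union_of_disjoint (disjoint_union_right.2 ⟨hd1, hd2 Y hYInjY⟩),
            card_union_of_disjoint hd3, hfib_card Y hYInjY, himgY Y hYinj]
      _ ≤ (univ : Finset V).card := card_le_card (subset_univ _)
      _ = M := by rw [card_univ, hV]
  have hNbcard : ∀ Y ∈ A, n₀ ≤ (Nb ℓ₀ Y).card := by
    intro Y hY
    obtain ⟨-, hYinj, hNbne⟩ := mem_filter.1 hY
    exact hkey ℓ₀ Y hYinj hNbne
  -- real upper bound on NE.card
  have hNEub : (NE.card : ℝ) ≤ (InjY.card : ℝ) * ((M:ℝ) - (q:ℝ)) - (A.card : ℝ) * (n₀ : ℝ) := by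
    have hsum1 : (NE.card : ℝ) = ∑ Y ∈ InjY, ((NE.filter (fun u => delTup ℓ₀ u = Y)).card : ℝ) := by
      rw [hfibsum]
      push_cast
      ring
    have hsplit : ∑ Y ∈ InjY, ((NE.filter (fun u => delTup ℓ₀ u = Y)).card : ℝ)
        = ∑ Y ∈ InjY \ A, ((NE.filter (fun u => delTup ℓ₀ u = Y)).card : ℝ)
          + ∑ Y ∈ A, ((NE.filter (fun u => delTup ℓ₀ u = Y)).card : ℝ) :=
      (sum_sdiff hAsub).symm
    have hsum2 : ∑ Y ∈ InjY \ A, ((NE.filter (fun u => delTup ℓ₀ u = Y)).card : ℝ)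
        ≤ ((InjY \ A).card : ℝ) * ((M:ℝ) - (q:ℝ)) := by
      rw [← nsmul_eq_mul]
      apply sum_le_card_nsmul
      intro Y hY
      have h := hany Y (sdiff_subset hY)
      have h' : ((NE.filter (fun u => delTup ℓ₀ u = Y)).card : ℝ) + (q:ℝ) ≤ (M:ℝ) := by
        exact_mod_cast h
      linarith
    have hsum3 : ∑ Y ∈ A, ((NE.filter (fun u => delTup ℓ₀ u = Y)).card : ℝ)
        ≤ (A.card : ℝ) * ((M:ℝ) - (q:ℝ) - (n₀:ℝ)) := by
      rw [← nsmul_eq_mul]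
      apply sum_le_card_nsmul
      intro Y hY
      have h := hgood Y hY
      have hn := hNbcard Y hY
      have h' : ((NE.filter (fun u => delTup ℓ₀ u = Y)).card : ℝ)
          + (((Nb ℓ₀ Y).card : ℝ) + (q:ℝ)) ≤ (M:ℝ) := by exact_mod_cast h
      have hn' : (n₀:ℝ) ≤ ((Nb ℓ₀ Y).card : ℝ) := by exact_mod_cast hn
      linarith
    have hcards : ((InjY \ A).card : ℝ) = (InjY.card : ℝ) - (A.card : ℝ) := by
      rw [card_sdiff_of_subset hAsub, Nat.cast_sub (card_le_card hAsub)]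
    have hring : ((InjY.card : ℝ) - (A.card : ℝ)) * ((M:ℝ) - (q:ℝ))
        + (A.card : ℝ) * ((M:ℝ) - (q:ℝ) - (n₀:ℝ))
        = (InjY.card : ℝ) * ((M:ℝ) - (q:ℝ)) - (A.card : ℝ) * (n₀ : ℝ) := by ring
    rw [hsum1, hsplit]
    rw [hcards] at hsum2
    linarith
  have hNEub2 : (NE.card : ℝ) ≤ (InjY.card : ℝ) * ((M:ℝ) - (q:ℝ)) - (n₀ : ℝ)^r := by
    have h1 : ((n₀:ℝ))^q ≤ (A.card : ℝ) := by exact_mod_cast hAcard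
    have h2 : (n₀:ℝ)^q * (n₀:ℝ) ≤ (A.card : ℝ) * (n₀:ℝ) :=
      mul_le_mul_of_nonneg_right h1 (Nat.cast_nonneg _)
    have h3 : (n₀:ℝ)^q * (n₀:ℝ) = (n₀:ℝ)^r := by
      rw [← pow_succ, hq]
    linarith
  -- lower bound via non-complete sets
  set SetsR : Finset (Finset V) := univ.filter (fun S => S.card = r) with hSetsRdef
  set CompF : Finset (Finset V) := SetsR.filter
    (fun S => ∀ w : Fin r → V, Function.Injective w →
      Finset.image w Finset.univ = S → w ∈ E) with hCompFdef
  have hSetsRcard : SetsR.card = M.choose r := by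
    have heq : SetsR = powersetCard r univ := by
      ext S
      simp [hSetsRdef, mem_powersetCard, subset_univ]
    rw [heq, card_powersetCard, card_univ, hV]
  have hdens' : (CompF.card : ℝ) ≤ (1 - α) * (M.choose r : ℝ) := by
    have hseteq : {S : Finset V | S.card = r ∧ ∀ w : Fin r → V, Function.Injective w →
        Finset.image w Finset.univ = S → w ∈ E} = ↑CompF := by
      ext S
      simp only [hCompFdef, hSetsRdef, coe_filter, mem_filter, mem_univ, true_and,
        Set.mem_setOf_eq]
    rw [hseteq, Set.ncard_coe_finset] at hdens
    exact hdens
  have hwit : ∀ S ∈ SetsR \ CompF, ∃ w : Fin r → V,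
      (Function.Injective w ∧ w ∉ E) ∧ Finset.image w Finset.univ = S := by
    intro S hS
    obtain ⟨hS1, hS2⟩ := mem_sdiff.1 hS
    rw [hCompFdef, mem_filter] at hS2
    push_neg at hS2
    obtain ⟨w, hw1, hw2, hw3⟩ := hS2 hS1
    exact ⟨w, ⟨hw1, hw3⟩, hw2⟩
  have hVne : Nonempty V := by
    apply Fintype.card_pos_iff.mp
    rw [hV]; omega
  choose! f hf1 hf2 using hwit
  have hNC_le : (SetsR \ CompF).card ≤ NE.card := by
    apply card_le_card_of_injOn f
    · intro S hS
      exact mem_filter.2 ⟨mem_univ _, hf1 S hS⟩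
    · intro S hS S' hS' h
      rw [← hf2 S hS, ← hf2 S' hS', h]
  have hCompF_le : CompF.card ≤ M.choose r :=
    hSetsRcard ▸ card_le_card (filter_subset _ _)
  have hlow : α * (M.choose r : ℝ) ≤ (NE.card : ℝ) := by
    have h1 : ((SetsR \ CompF).card : ℝ) = (M.choose r : ℝ) - (CompF.card : ℝ) := by
      rw [card_sdiff_of_subset (filter_subset _ _), hSetsRcard, Nat.cast_sub hCompF_le]
    have h2 : ((SetsR \ CompF).card : ℝ) ≤ (NE.card : ℝ) := by exact_mod_cast hNC_le
    nlinarith [hdens']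
  -- identities for descFactorial
  have hTnat : M.descFactorial r = M.descFactorial q * (M - q) := by
    conv_lhs => rw [← hq]
    rw [Nat.descFactorial_succ, Nat.mul_comm]
  have hfac : M.descFactorial r = r.factorial * M.choose r :=
    Nat.descFactorial_eq_factorial_mul_choose M r
  have hPM : (InjY.card : ℝ) * ((M:ℝ) - (q:ℝ)) = (r.factorial : ℝ) * (M.choose r : ℝ) := by
    rw [hPcard, ← Nat.cast_sub hqM, ← Nat.cast_mul, ← hTnat, hfac]
    push_cast
    ring
  -- final contradiction
  have hkey2 : ((n₀:ℝ))^r ≤ (1 - 2*(r:ℝ)*ε) * ((r.factorial : ℝ) * (M.choose r : ℝ)) := by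
    have hαε : α = ε * (2*(r:ℝ)*(r.factorial:ℝ)) := by
      have hX : (2*(r:ℝ)*(r.factorial:ℝ)) ≠ 0 := by positivity
      rw [hεdef, div_mul_cancel₀ _ hX]
    have hring : ((r.factorial : ℝ) * (M.choose r : ℝ))
        - (ε * (2*(r:ℝ)*(r.factorial:ℝ))) * (M.choose r : ℝ)
        = (1 - 2*(r:ℝ)*ε) * ((r.factorial : ℝ) * (M.choose r : ℝ)) := by ring
    rw [hPM] at hNEub2
    rw [hαε] at hlow
    linarith
  have hb1 : ((1 - ε) * (M:ℝ))^r < (n₀:ℝ)^r :=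
    pow_lt_pow_left₀ hn₀gt h1εM (by omega)
  have hb2 : ((1 - ε) * (M:ℝ))^r = (1 - ε)^r * (M:ℝ)^r := mul_pow _ _ _
  have hbern : 1 - (r:ℝ) * ε ≤ (1 - ε)^r := by
    have h := one_add_mul_le_pow (a := -ε) (by linarith) r
    rw [show (1:ℝ) + -ε = 1 - ε by ring] at h
    linarith
  have hMpow : (r.factorial : ℝ) * (M.choose r : ℝ) ≤ (M:ℝ)^r := by
    have h := Nat.descFactorial_le_pow M r
    have h' : (M.descFactorial r : ℝ) ≤ ((M:ℝ))^r := by exact_mod_cast h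
    rw [hfac] at h'
    push_cast at h'
    linarith
  have hMpow_nonneg : (0:ℝ) ≤ (M:ℝ)^r := by positivity
  have ht_pos : (0:ℝ) < (r.factorial : ℝ) * (M.choose r : ℝ) := by positivity
  have hp : (0:ℝ) ≤ (r:ℝ)*ε := by positivity
  rcases le_or_gt 0 (1 - 2*(r:ℝ)*ε) with hc1 | hc1
  · have s1 : (1 - 2*(r:ℝ)*ε) * ((r.factorial : ℝ) * (M.choose r : ℝ))
        ≤ (1 - 2*(r:ℝ)*ε) * (M:ℝ)^r := mul_le_mul_of_nonneg_left hMpow hc1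
    have s2 : (1 - 2*(r:ℝ)*ε) * (M:ℝ)^r ≤ (1 - (r:ℝ)*ε) * (M:ℝ)^r := by
      apply mul_le_mul_of_nonneg_right _ hMpow_nonneg
      linarith
    have s3 : (1 - (r:ℝ)*ε) * (M:ℝ)^r ≤ (1 - ε)^r * (M:ℝ)^r :=
      mul_le_mul_of_nonneg_right hbern hMpow_nonneg
    linarith
  · have s1 : (1 - 2*(r:ℝ)*ε) * ((r.factorial : ℝ) * (M.choose r : ℝ)) < 0 :=
      mul_neg_of_neg_of_pos hc1 ht_pos
    have s2 : (0:ℝ) ≤ (n₀:ℝ)^r := by positivity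
    linarith
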